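/- Let n ≥ 4 and let k be an even integer with 4 ≤ k ≤ n. Define t₁ = −(k−1)/(n−k) · ( √((n−1)/(k(n−k))) + 1 )^{−1} (for k < n). Then for all real t ≥ t₁, binom(n−2,k)·t² + 2·binom(n−2,k−1)·t + binom(n−2,k−2) ≥ 0. -/
import Mathlib


set_option maxHeartbeats 1000000 in
/-- Example 4.2: for even `k` with `4 ≤ k < n`, setting
`t₁ = −(k−1)/(n−k)·(√((n−1)/(k(n−k))) + 1)⁻¹`, the quadratic
`C(n−2,k)t² + 2C(n−2,k−1)t + C(n−2,k−2)` is nonnegative for all `t ≥ t₁`. -/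
theorem stmt11 (n k : ℕ) (hk : 4 ≤ k) (hkn : k < n) (heven : Even k) (t : ℝ)
    (ht : -((k : ℝ) - 1) / ((n : ℝ) - k) *
        (Real.sqrt (((n : ℝ) - 1) / (k * ((n : ℝ) - k))) + 1)⁻¹ ≤ t) :
    0 ≤ (Nat.choose (n - 2) k : ℝ) * t ^ 2
        + 2 * (Nat.choose (n - 2) (k - 1) : ℝ) * t
        + (Nat.choose (n - 2) (k - 2) : ℝ) := by
  have hK4 : (4:ℝ) ≤ (k:ℝ) := by exact_mod_cast hk
  have hNK : (k:ℝ) + 1 ≤ (n:ℝ) := by exact_mod_cast hkn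
  have hNKpos : (0:ℝ) < (n:ℝ) - k := by linarith
  set s : ℝ := Real.sqrt (((n : ℝ) - 1) / (k * ((n : ℝ) - k))) with hsdef
  have hsnn : 0 ≤ s := Real.sqrt_nonneg _
  have hs2 : s ^ 2 * ((k:ℝ) * ((n:ℝ) - k)) = (n:ℝ) - 1 := by
    have harg : 0 ≤ ((n:ℝ) - 1) / ((k:ℝ) * ((n:ℝ) - k)) := by
      apply div_nonneg <;> nlinarith
    rw [hsdef, Real.sq_sqrt harg]
    field_simp
  -- cast lemmas
  have hc1 : ((n - 1 - k : ℕ):ℝ) = (n:ℝ) - 1 - k := by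
    rw [Nat.cast_sub (by omega : k ≤ n - 1), Nat.cast_sub (by omega : 1 ≤ n)]
    norm_num
  have hc2 : ((n - k : ℕ):ℝ) = (n:ℝ) - k := by
    rw [Nat.cast_sub (by omega : k ≤ n)]
  have hc3 : ((k - 1 : ℕ):ℝ) = (k:ℝ) - 1 := by
    rw [Nat.cast_sub (by omega : 1 ≤ k)]
    norm_num
  -- binomial identities, cast to ℝ
  have hA : (k:ℝ) * (Nat.choose (n - 2) k : ℝ)
      = ((n:ℝ) - 1 - k) * (Nat.choose (n - 2) (k - 1) : ℝ) := by
    have h := Nat.choose_succ_right_eq (n - 2) (k - 1)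
    rw [show k - 1 + 1 = k by omega, show n - 2 - (k - 1) = n - 1 - k by omega] at h
    have h' := congrArg (fun m : ℕ => (m : ℝ)) h
    simp only [Nat.cast_mul, hc1] at h'
    linarith
  have hC : ((k:ℝ) - 1) * (Nat.choose (n - 2) (k - 1) : ℝ)
      = ((n:ℝ) - k) * (Nat.choose (n - 2) (k - 2) : ℝ) := by
    have h := Nat.choose_succ_right_eq (n - 2) (k - 2)
    rw [show k - 2 + 1 = k - 1 by omega, show n - 2 - (k - 2) = n - k by omega] at h
    have h' := congrArg (fun m : ℕ => (m : ℝ)) h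
    simp only [Nat.cast_mul, hc2, hc3] at h'
    linarith
  have hBpos : (0:ℝ) < (Nat.choose (n - 2) (k - 1) : ℝ) := by
    have : 0 < Nat.choose (n - 2) (k - 1) := Nat.choose_pos (by omega)
    exact_mod_cast this
  -- rewrite hypothesis ht
  have hsp : (0:ℝ) < s + 1 := by linarith
  have hpos : (0:ℝ) < ((n:ℝ) - k) * (s + 1) := by positivity
  have h1 : 0 ≤ ((n:ℝ) - k) * (s + 1) * t + ((k:ℝ) - 1) := by
    have e : -((k:ℝ) - 1) / ((n:ℝ) - k) * (s + 1)⁻¹ * (((n:ℝ) - k) * (s + 1))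
        = -((k:ℝ) - 1) := by
      field_simp
    have h := mul_le_mul_of_nonneg_right ht hpos.le
    rw [e] at h
    nlinarith [h]
  -- first factor nonneg
  have hNK1 : (0:ℝ) ≤ (n:ℝ) - k - 1 := by linarith
  have hF1 : 0 ≤ ((n:ℝ) - k - 1) * t + (k:ℝ) * (s + 1) := by
    nlinarith [mul_nonneg hNK1 h1, hs2, mul_nonneg hsnn hNKpos.le, sq_nonneg s,
      mul_nonneg (mul_nonneg hsnn hsnn) hNKpos.le]
  -- P := scaled quadratic
  set P : ℝ := ((n:ℝ) - k - 1) * ((n:ℝ) - k) * t ^ 2 + 2 * k * ((n:ℝ) - k) * t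
      + (k:ℝ) * ((k:ℝ) - 1) with hP
  have hkey : (s + 1) * P
      = (((n:ℝ) - k - 1) * t + (k:ℝ) * (s + 1))
        * (((n:ℝ) - k) * (s + 1) * t + ((k:ℝ) - 1)) := by
    simp only [hP]
    linear_combination (-t) * hs2
  have hPnn : 0 ≤ P := by
    have h2 : 0 ≤ (s + 1) * P := hkey ▸ mul_nonneg hF1 h1
    nlinarith [h2, hsp]
  have hfin : (k:ℝ) * ((n:ℝ) - k) * ((Nat.choose (n - 2) k : ℝ) * t ^ 2
        + 2 * (Nat.choose (n - 2) (k - 1) : ℝ) * t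
        + (Nat.choose (n - 2) (k - 2) : ℝ))
      = (Nat.choose (n - 2) (k - 1) : ℝ) * P := by
    simp only [hP]
    linear_combination (((n:ℝ) - k) * t ^ 2) * hA - (k:ℝ) * hC
  have hKNK : (0:ℝ) < (k:ℝ) * ((n:ℝ) - k) := by positivity
  have hBP : 0 ≤ (k:ℝ) * ((n:ℝ) - k) * ((Nat.choose (n - 2) k : ℝ) * t ^ 2
        + 2 * (Nat.choose (n - 2) (k - 1) : ℝ) * t
        + (Nat.choose (n - 2) (k - 2) : ℝ)) := hfin ▸ mul_nonneg hBpos.le hPnn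
  exact (mul_nonneg_iff_of_pos_left hKNK).mp hBP
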